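/- If (X^i_{jkl}) (indices i, j, k, l ∈ {1,2}) is a real array totally symmetric in the three lower indices j, k, l such that for every fixed l ∈ {1,2} the array (X^i_{jkl})_{i,j,k} belongs to g², then X^i_{jkl} = 0 for all indices. In other words, the first prolongation of g² is the zero space. -/
import Mathlib


/- STATEMENT 4: the first prolongation of g² is zero: any array (X^i_{jkl}) totally
   symmetric in j, k, l whose contraction with each fixed l lies in g² vanishes. -/

/-- The space g² of arrays (X^i_{jk}), symmetric in the lower indices, satisfying
X²₁₁ = 0, X¹₁₁ − 2X²₁₂ = 0, 2X¹₁₂ − X²₂₂ = 0, X¹₂₂ = 0.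
(Index value `0` stands for `1`, index value `1` stands for `2`.) -/
def g2 : Submodule ℝ (Fin 2 → Fin 2 → Fin 2 → ℝ) where
  carrier := {X | (∀ i j k, X i j k = X i k j) ∧
    X 1 0 0 = 0 ∧ X 0 0 0 - 2 * X 1 0 1 = 0 ∧ 2 * X 0 0 1 - X 1 1 1 = 0 ∧ X 0 1 1 = 0}
  add_mem' := by
    rintro X Y ⟨hs, h1, h2, h3, h4⟩ ⟨hs', h1', h2', h3', h4'⟩
    refine ⟨fun i j k => ?_, ?_, ?_, ?_, ?_⟩ <;>
      simp only [Pi.add_apply] <;>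
      first
        | rw [hs i j k, hs' i j k]
        | linarith
  zero_mem' := ⟨fun i j k => rfl, by norm_num, by norm_num, by norm_num, by norm_num⟩
  smul_mem' := by
    rintro c X ⟨hs, h1, h2, h3, h4⟩
    refine ⟨fun i j k => ?_, ?_, ?_, ?_, ?_⟩ <;>
      simp only [Pi.smul_apply, smul_eq_mul] <;>
      first
        | rw [hs i j k]
        | linear_combination c * h1
        | linear_combination c * h2
        | linear_combination c * h3
        | linear_combination c * h4

theorem stmt4 (X : Fin 2 → Fin 2 → Fin 2 → Fin 2 → ℝ)
    (hsym1 : ∀ i j k l, X i j k l = X i k j l)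
    (hsym2 : ∀ i j k l, X i j k l = X i j l k)
    (hg : ∀ l, (fun i j k => X i j k l) ∈ g2) :
    X = 0 := by
  obtain ⟨_, a1, a2, a3, a4⟩ := hg 0
  obtain ⟨_, b1, b2, b3, b4⟩ := hg 1
  simp only at a1 a2 a3 a4 b1 b2 b3 b4
  have zb000 : X 1 0 0 0 = 0 := a1
  have zb001 : X 1 0 0 1 = 0 := b1
  have za011 : X 0 1 1 0 = 0 := a4
  have za111 : X 0 1 1 1 = 0 := b4
  have za000 : X 0 0 0 0 = 0 := by
    have h := hsym2 1 0 1 0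
    linarith
  have e1 : X 1 1 1 0 = X 1 0 1 1 := by
    rw [hsym2 1 1 1 0, hsym1 1 1 0 1]
  have e2 : X 0 0 1 0 = X 0 0 0 1 := hsym2 0 0 1 0
  have za001 : X 0 0 0 1 = 0 := by linarith
  have zb011 : X 1 0 1 1 = 0 := by linarith
  have zb111 : X 1 1 1 1 = 0 := by
    have h : X 0 0 1 1 = X 0 1 1 0 := by rw [hsym1 0 0 1 1, hsym2 0 1 0 1]
    linarith
  have zb110 : X 1 1 1 0 = 0 := by linarith
  have za010 : X 0 0 1 0 = 0 := e2.trans za001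
  have za100 : X 0 1 0 0 = 0 := by rw [hsym1 0 1 0 0]; exact za010
  have za101 : X 0 1 0 1 = 0 := by rw [hsym2 0 1 0 1]; exact za011
  have zc011 : X 0 0 1 1 = 0 := by rw [hsym1 0 0 1 1, hsym2 0 1 0 1]; exact za011
  have zb010 : X 1 0 1 0 = 0 := by rw [hsym2 1 0 1 0]; exact zb001
  have zb100 : X 1 1 0 0 = 0 := by rw [hsym1 1 1 0 0]; exact zb010
  have zb101 : X 1 1 0 1 = 0 := by rw [hsym2 1 1 0 1]; exact zb110
  funext i j k l
  fin_cases i <;> fin_cases j <;> fin_cases k <;> fin_cases l <;>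
    first
      | exact za000 | exact za001 | exact za010 | exact za100 | exact za101
      | exact za011 | exact za111 | exact zc011
      | exact zb000 | exact zb001 | exact zb010 | exact zb100 | exact zb101
      | exact zb011 | exact zb110 | exact zb111
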